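/- Let C be a category with a monoidal structure whose underlying category is cocomplete and co-wellpowered. If μ : C → D and ν : C → E are epimorphisms in the category of comonoids in C, and h : D → E is an isomorphism in C (of underlying objects) satisfying h ∘ μ = ν, then h is a comonoid morphism (i.e., it is compatible with the comultiplications and counits of D and E), and hence an isomorphism of comonoids. Consequently, if the underlying category C is co-wellpowered, then so is the category of comonoids in C. -/

import Mathlib

open CategoryTheory MonoidalCategory Limits

universe v

section Aux

open scoped ComonObj

variable {C : Type*} [Category C] [MonoidalCategory C]

private lemma tensor_comp_whiskerRight' {X₁ Y₁ X₂ Y₂ Z : C} (f : X₁ ⟶ Y₁) (g : X₂ ⟶ Y₂)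
    (h : Y₁ ⟶ Z) : (f ⊗ₘ g) ≫ (h ▷ Y₂) = (f ≫ h) ⊗ₘ g := by
  rw [← tensorHom_id, tensorHom_comp_tensorHom, Category.comp_id]

private lemma tensor_comp_whiskerLeft' {X₁ Y₁ X₂ Y₂ Z : C} (f : X₁ ⟶ Y₁) (g : X₂ ⟶ Y₂)
    (h : Y₂ ⟶ Z) : (f ⊗ₘ g) ≫ (Y₁ ◁ h) = f ⊗ₘ (g ≫ h) := by
  rw [← id_tensorHom, tensorHom_comp_tensorHom, Category.comp_id]

private lemma counit_aux {D : Comon C} {P : C} (cP : P ⟶ 𝟙_ C) (mP : P ⟶ P ⊗ P)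
    (j : D.X ⟶ P) (hc : j ≫ cP = ε[D.X]) (hm : j ≫ mP = Δ[D.X] ≫ (j ⊗ₘ j)) :
    j ≫ mP ≫ (cP ▷ P) = j ≫ (λ_ P).inv := by
  rw [← Category.assoc, hm, Category.assoc, tensor_comp_whiskerRight', hc, MonoidalCategory.tensorHom_def,
    ComonObj.counit_comul_assoc, ← leftUnitor_inv_naturality]

private lemma comul_counit_aux {D : Comon C} {P : C} (cP : P ⟶ 𝟙_ C) (mP : P ⟶ P ⊗ P)
    (j : D.X ⟶ P) (hc : j ≫ cP = ε[D.X]) (hm : j ≫ mP = Δ[D.X] ≫ (j ⊗ₘ j)) :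
    j ≫ mP ≫ (P ◁ cP) = j ≫ (ρ_ P).inv := by
  rw [← Category.assoc, hm, Category.assoc, tensor_comp_whiskerLeft', hc, tensorHom_def',
    ComonObj.comul_counit_assoc, ← rightUnitor_inv_naturality]

private lemma comul_assoc_aux {D : Comon C} {P : C} (mP : P ⟶ P ⊗ P)
    (j : D.X ⟶ P) (hm : j ≫ mP = Δ[D.X] ≫ (j ⊗ₘ j)) :
    j ≫ mP ≫ (P ◁ mP) = j ≫ mP ≫ (mP ▷ P) ≫ (α_ P P P).hom := by
  calc j ≫ mP ≫ (P ◁ mP)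
      = Δ[D.X] ≫ (j ⊗ₘ j) ≫ (P ◁ mP) := by rw [← Category.assoc, hm, Category.assoc]
    _ = Δ[D.X] ≫ (j ⊗ₘ (Δ[D.X] ≫ (j ⊗ₘ j))) := by rw [tensor_comp_whiskerLeft', hm]
    _ = Δ[D.X] ≫ ((𝟙 D.X ≫ j) ⊗ₘ (Δ[D.X] ≫ (j ⊗ₘ j))) := by rw [Category.id_comp]
    _ = Δ[D.X] ≫ (𝟙 D.X ⊗ₘ Δ[D.X]) ≫ (j ⊗ₘ (j ⊗ₘ j)) := by rw [← tensorHom_comp_tensorHom]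
    _ = Δ[D.X] ≫ (D.X ◁ Δ[D.X]) ≫ (j ⊗ₘ (j ⊗ₘ j)) := by rw [id_tensorHom]
    _ = Δ[D.X] ≫ (Δ[D.X] ▷ D.X) ≫ (α_ D.X D.X D.X).hom ≫ (j ⊗ₘ (j ⊗ₘ j)) := by
        rw [ComonObj.comul_assoc_assoc]
    _ = Δ[D.X] ≫ (Δ[D.X] ▷ D.X) ≫ ((j ⊗ₘ j) ⊗ₘ j) ≫ (α_ P P P).hom := by
        rw [associator_naturality]
    _ = Δ[D.X] ≫ (Δ[D.X] ⊗ₘ 𝟙 D.X) ≫ ((j ⊗ₘ j) ⊗ₘ j) ≫ (α_ P P P).hom := by rw [tensorHom_id]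
    _ = Δ[D.X] ≫ ((Δ[D.X] ≫ (j ⊗ₘ j)) ⊗ₘ (𝟙 D.X ≫ j)) ≫ (α_ P P P).hom := by
        rw [tensorHom_comp_tensorHom_assoc]
    _ = Δ[D.X] ≫ ((j ≫ mP) ⊗ₘ j) ≫ (α_ P P P).hom := by rw [hm, Category.id_comp]
    _ = Δ[D.X] ≫ ((j ⊗ₘ j) ≫ (mP ▷ P)) ≫ (α_ P P P).hom := by
        rw [tensor_comp_whiskerRight']
    _ = j ≫ mP ≫ (mP ▷ P) ≫ (α_ P P P).hom := by
        rw [← Category.assoc, ← Category.assoc, ← hm, Category.assoc, Category.assoc]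

variable [HasPushouts C]

/-- The cokernel pair of a comonoid morphism, as a comonoid. -/
noncomputable def pushoutComon {A D : Comon C} (μ : A ⟶ D) : Comon C where
  X := pushout μ.hom μ.hom
  comon := {
    counit := pushout.desc ε[D.X] ε[D.X] rfl
    comul := pushout.desc (Δ[D.X] ≫ (pushout.inl μ.hom μ.hom ⊗ₘ pushout.inl μ.hom μ.hom))
        (Δ[D.X] ≫ (pushout.inr μ.hom μ.hom ⊗ₘ pushout.inr μ.hom μ.hom)) (by
          rw [IsComonHom.hom_comul_assoc μ.hom, IsComonHom.hom_comul_assoc μ.hom,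
            tensorHom_comp_tensorHom, tensorHom_comp_tensorHom, pushout.condition])
    counit_comul := by
      apply pushout.hom_ext
      · exact counit_aux (D := D) _ _ _ (pushout.inl_desc _ _ _) (pushout.inl_desc _ _ _)
      · exact counit_aux (D := D) _ _ _ (pushout.inr_desc _ _ _) (pushout.inr_desc _ _ _)
    comul_counit := by
      apply pushout.hom_ext
      · exact comul_counit_aux (D := D) _ _ _ (pushout.inl_desc _ _ _) (pushout.inl_desc _ _ _)
      · exact comul_counit_aux (D := D) _ _ _ (pushout.inr_desc _ _ _) (pushout.inr_desc _ _ _)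
    comul_assoc := by
      apply pushout.hom_ext
      · exact comul_assoc_aux (D := D) _ _ (pushout.inl_desc _ _ _)
      · exact comul_assoc_aux (D := D) _ _ (pushout.inr_desc _ _ _) }

/-- The forgetful functor from comonoids preserves epimorphisms. -/
lemma Comon_epi_hom {A D : Comon C} (μ : A ⟶ D) [Epi μ] : Epi μ.hom := by
  have key : pushout.inl μ.hom μ.hom = pushout.inr μ.hom μ.hom := by
    let i₁ : D ⟶ pushoutComon μ :=
      { hom := pushout.inl μ.hom μ.hom
        isComonHom_hom := ⟨pushout.inl_desc _ _ _, pushout.inl_desc _ _ _⟩ }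
    let i₂ : D ⟶ pushoutComon μ :=
      { hom := pushout.inr μ.hom μ.hom
        isComonHom_hom := ⟨pushout.inr_desc _ _ _, pushout.inr_desc _ _ _⟩ }
    have h12 : μ ≫ i₁ = μ ≫ i₂ := Comon.ext pushout.condition
    have := (cancel_epi μ).mp h12
    exact congrArg Comon.Hom.hom this
  constructor
  intro Z g k w
  calc g = pushout.inl μ.hom μ.hom ≫ pushout.desc g k w := (pushout.inl_desc _ _ _).symm
    _ = pushout.inr μ.hom μ.hom ≫ pushout.desc g k w := by rw [key]
    _ = k := pushout.inr_desc _ _ _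

end Aux

/-- (Proposition 2.3.)  Let `C` be a monoidal category whose underlying category is
cocomplete and co-wellpowered.  If `μ : A ⟶ D` and `ν : A ⟶ E` are epimorphisms in the
category `Comon C` of comonoids in `C`, and `h : D.X ≅ E.X` is an isomorphism of the
underlying objects with `h ∘ μ = ν`, then `h` is compatible with the comultiplications
and counits of `D` and `E`, i.e. it is a (iso)morphism of comonoids.  Consequently
`Comon C` is co-wellpowered. -/
theorem comon_epi_iso_is_comon_hom_and_coWellPowered
    (C : Type*) [Category.{v} C] [MonoidalCategory C]
    [Limits.HasColimits C] [WellPowered.{v} Cᵒᵖ] :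
    (∀ (A D E : Comon C) (μ : A ⟶ D) (ν : A ⟶ E), Epi μ → Epi ν →
      ∀ (h : D.X ≅ E.X), μ.hom ≫ h.hom = ν.hom →
        (h.hom ≫ ComonObj.counit (X := E.X) = ComonObj.counit (X := D.X) ∧
         h.hom ≫ ComonObj.comul (X := E.X) = ComonObj.comul (X := D.X) ≫ (h.hom ⊗ₘ h.hom))) ∧
    WellPowered.{v} (Comon C)ᵒᵖ := by
  have part1 : ∀ (A D E : Comon C) (μ : A ⟶ D) (ν : A ⟶ E), Epi μ → Epi ν →
      ∀ (h : D.X ≅ E.X), μ.hom ≫ h.hom = ν.hom →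
        (h.hom ≫ ComonObj.counit (X := E.X) = ComonObj.counit (X := D.X) ∧
         h.hom ≫ ComonObj.comul (X := E.X) = ComonObj.comul (X := D.X) ≫ (h.hom ⊗ₘ h.hom)) := by
    intro A D E μ ν hμ hν h hcomm
    haveI : Epi μ := hμ
    haveI : Epi μ.hom := Comon_epi_hom μ
    constructor
    · rw [← cancel_epi μ.hom, ← Category.assoc, hcomm, IsComonHom.hom_counit ν.hom,
        IsComonHom.hom_counit μ.hom]
    · rw [← cancel_epi μ.hom, ← Category.assoc, hcomm, IsComonHom.hom_comul ν.hom,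
        IsComonHom.hom_comul_assoc μ.hom, tensorHom_comp_tensorHom, hcomm]
  refine ⟨part1, ?_⟩
  constructor
  intro Dop
  -- the map taking a quotient comonoid to the underlying quotient object
  have mono_inst : ∀ {A : (Comon C)ᵒᵖ} (f : A ⟶ Dop) [Mono f], Mono f.unop.hom.op := by
    intro A f hf
    haveI : Epi f.unop := unop_epi_of_mono f
    haveI : Epi f.unop.hom := Comon_epi_hom f.unop
    exact op_mono_of_epi _
  let F : Subobject Dop → Subobject (Opposite.op Dop.unop.X) :=
    Subobject.lift (fun A f _ => haveI := mono_inst f; Subobject.mk f.unop.hom.op)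
      (by
        intro A B f g hf hg i w
        haveI := mono_inst f; haveI := mono_inst g
        refine Subobject.mk_eq_mk_of_comm _ _ (((Comon.forget C).mapIso i.unop).op) ?_
        have w' : g.unop ≫ i.hom.unop = f.unop := by rw [← w]; rfl
        have w'' : g.unop.hom ≫ (i.hom.unop).hom = f.unop.hom := congrArg Comon.Hom.hom w'
        show ((i.hom.unop).hom).op ≫ g.unop.hom.op = f.unop.hom.op
        rw [← op_comp, w''])
  have hinj : Function.Injective F := by
    refine Subobject.ind₂ (fun P Q => F P = F Q → P = Q) ?_
    intro A B f g hf hg hFQ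
    haveI := mono_inst f; haveI := mono_inst g
    simp only [F, Subobject.lift_mk] at hFQ
    let e := Subobject.isoOfMkEqMk f.unop.hom.op g.unop.hom.op hFQ
    have he : e.hom ≫ g.unop.hom.op = f.unop.hom.op := Subobject.ofMkLEMk_comp hFQ.le
    have he' : g.unop.hom ≫ e.hom.unop = f.unop.hom := by
      have := congrArg Quiver.Hom.unop he
      simpa using this
    haveI : Epi f.unop := unop_epi_of_mono f
    haveI : Epi g.unop := unop_epi_of_mono g
    obtain ⟨h1, h2⟩ := part1 Dop.unop B.unop A.unop g.unop f.unop inferInstance inferInstance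
      e.unop he'
    let φ : B.unop ≅ A.unop := Comon.mkIso e.unop h1 h2
    refine Subobject.mk_eq_mk_of_comm _ _ φ.op ?_
    apply Quiver.Hom.unop_inj
    apply Comon.ext
    show g.unop.hom ≫ e.unop.hom = f.unop.hom
    exact he'
  exact small_of_injective hinj
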